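/- For every real p with 1 ≤ p ≤ 2, the function f(x) = x^p on [0,∞) is subquadratic: for every x ≥ 0 there exists a constant C(x) ∈ ℝ (one may take C(x) = p·x^{p−1}) such that for all y ≥ 0, y^p ≤ x^p + C(x)·(y − x) + |y − x|^p. -/

import Mathlib

open Real

/-- Subadditivity of `t ↦ t ^ q` on nonneg reals for `0 ≤ q ≤ 1`. -/
lemma rpow_subadd_aux {q a b : ℝ} (hq0 : 0 ≤ q) (hq1 : q ≤ 1) (ha : 0 ≤ a) (hb : 0 ≤ b) :
    (a + b) ^ q ≤ a ^ q + b ^ q := by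
  lift a to NNReal using ha
  lift b to NNReal using hb
  exact_mod_cast NNReal.rpow_add_le_add_rpow a b hq0 hq1

/-- Key lemma for the case `x ≤ y`. -/
lemma rpow_key1 {p a : ℝ} (hp1 : 1 ≤ p) (hp2 : p ≤ 2) (ha : 0 ≤ a) :
    ∀ b : ℝ, 0 ≤ b → (a + b) ^ p ≤ a ^ p + p * a ^ (p - 1) * b + b ^ p := by
  have hppos : (0:ℝ) < p := lt_of_lt_of_le zero_lt_one hp1
  have hmono : MonotoneOn
      (fun b : ℝ => a ^ p + p * a ^ (p - 1) * b + b ^ p - (a + b) ^ p) (Set.Ici 0) := by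
    have hcont : ContinuousOn
        (fun b : ℝ => a ^ p + p * a ^ (p - 1) * b + b ^ p - (a + b) ^ p) (Set.Ici 0) := by
      apply ContinuousOn.sub
      · exact (continuousOn_const.add (continuousOn_const.mul continuousOn_id)).add
          ((Real.continuous_rpow_const (by linarith)).continuousOn)
      · exact ((continuous_const.add continuous_id).comp continuous_id).continuousOn.rpow_const
          (fun t _ => Or.inr (by linarith))
    have hderiv : ∀ b ∈ interior (Set.Ici (0:ℝ)),
        HasDerivAt (fun b : ℝ => a ^ p + p * a ^ (p - 1) * b + b ^ p - (a + b) ^ p)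
          (p * a ^ (p - 1) + p * b ^ (p - 1) - p * (a + b) ^ (p - 1)) b := by
      intro b hb
      have h1 : HasDerivAt (fun b : ℝ => b ^ p) (p * b ^ (p - 1)) b :=
        Real.hasDerivAt_rpow_const (Or.inr hp1)
      have h2 : HasDerivAt (fun b : ℝ => (a + b) ^ p) (p * (a + b) ^ (p - 1)) b := by
        have := (Real.hasDerivAt_rpow_const (x := a + b) (p := p) (Or.inr hp1)).comp b
          ((hasDerivAt_id b).const_add a)
        simpa [Function.comp_def] using this
      have h3 : HasDerivAt (fun b : ℝ => a ^ p + p * a ^ (p - 1) * b)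
          (p * a ^ (p - 1)) b := by
        simpa using ((hasDerivAt_id b).const_mul (p * a ^ (p - 1))).const_add (a ^ p)
      simpa [Pi.add_def, Pi.sub_def] using (h3.add h1).sub h2
    apply monotoneOn_of_deriv_nonneg (convex_Ici 0) hcont
    · intro b hb
      exact (hderiv b hb).differentiableAt.differentiableWithinAt
    · intro b hb
      rw [(hderiv b hb).deriv]
      rw [interior_Ici] at hb
      have hb' : (0:ℝ) < b := hb
      have hsub : (a + b) ^ (p - 1) ≤ a ^ (p - 1) + b ^ (p - 1) :=
        rpow_subadd_aux (by linarith) (by linarith) ha hb'.le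
      nlinarith [mul_le_mul_of_nonneg_left hsub hppos.le]
  intro b hb
  have hm := hmono Set.self_mem_Ici hb hb
  simp only [mul_zero, add_zero, Real.zero_rpow hppos.ne'] at hm
  linarith

/-- Key lemma for the case `y ≤ x`. -/
lemma rpow_key2 {p a : ℝ} (hp1 : 1 ≤ p) (hp2 : p ≤ 2) (ha : 0 ≤ a) :
    ∀ b : ℝ, 0 ≤ b → p * (a + b) ^ (p - 1) * b ≤ (a + b) ^ p - a ^ p + b ^ p := by
  have hppos : (0:ℝ) < p := lt_of_lt_of_le zero_lt_one hp1
  have hmono : MonotoneOn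
      (fun b : ℝ => (a + b) ^ p - a ^ p + b ^ p - p * ((a + b) ^ (p - 1) * b)) (Set.Ici 0) := by
    have hcont : ContinuousOn
        (fun b : ℝ => (a + b) ^ p - a ^ p + b ^ p - p * ((a + b) ^ (p - 1) * b)) (Set.Ici 0) := by
      have hc1 : ContinuousOn (fun b : ℝ => (a + b) ^ p) (Set.Ici 0) :=
        ((continuous_const.add continuous_id).comp continuous_id).continuousOn.rpow_const
          (fun t _ => Or.inr (by linarith))
      have hc2 : ContinuousOn (fun b : ℝ => (a + b) ^ (p - 1)) (Set.Ici 0) :=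
        ((continuous_const.add continuous_id).comp continuous_id).continuousOn.rpow_const
          (fun t _ => Or.inr (by linarith))
      exact ((hc1.sub continuousOn_const).add
        ((Real.continuous_rpow_const (by linarith)).continuousOn)).sub
        (continuousOn_const.mul (hc2.mul continuousOn_id))
    have hderiv : ∀ b ∈ interior (Set.Ici (0:ℝ)),
        HasDerivAt (fun b : ℝ => (a + b) ^ p - a ^ p + b ^ p - p * ((a + b) ^ (p - 1) * b))
          (p * (a + b) ^ (p - 1) + p * b ^ (p - 1)
            - p * ((p - 1) * (a + b) ^ (p - 2) * b + (a + b) ^ (p - 1) * 1)) b := by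
      intro b hb
      rw [interior_Ici] at hb
      have hb0 : (0:ℝ) < b := hb
      have hab : a + b ≠ 0 := by linarith
      have h1 : HasDerivAt (fun b : ℝ => b ^ p) (p * b ^ (p - 1)) b :=
        Real.hasDerivAt_rpow_const (Or.inr hp1)
      have h2 : HasDerivAt (fun b : ℝ => (a + b) ^ p) (p * (a + b) ^ (p - 1)) b := by
        have := (Real.hasDerivAt_rpow_const (x := a + b) (p := p) (Or.inr hp1)).comp b
          ((hasDerivAt_id b).const_add a)
        simpa [Function.comp_def] using this
      have h3 : HasDerivAt (fun b : ℝ => (a + b) ^ (p - 1))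
          ((p - 1) * (a + b) ^ (p - 1 - 1)) b := by
        have := (Real.hasDerivAt_rpow_const (x := a + b) (p := p - 1) (Or.inl hab)).comp b
          ((hasDerivAt_id b).const_add a)
        simpa [Function.comp_def] using this
      have h4 : HasDerivAt (fun b : ℝ => (a + b) ^ (p - 1) * b)
          ((p - 1) * (a + b) ^ (p - 2) * b + (a + b) ^ (p - 1) * 1) b := by
        have := h3.mul (hasDerivAt_id b)
        simpa [show p - 1 - 1 = p - 2 by ring, Pi.mul_def] using this
      simpa [Pi.add_def, Pi.sub_def] using ((h2.sub_const (a ^ p)).add h1).sub (h4.const_mul p)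
    apply monotoneOn_of_deriv_nonneg (convex_Ici 0) hcont
    · intro b hb
      exact (hderiv b hb).differentiableAt.differentiableWithinAt
    · intro b hb
      rw [(hderiv b hb).deriv]
      rw [interior_Ici] at hb
      have hb' : (0:ℝ) < b := hb
      have h5 : (a + b) ^ (p - 2) ≤ b ^ (p - 2) :=
        Real.rpow_le_rpow_of_nonpos hb' (by linarith) (by linarith)
      have h6 : b ^ (p - 2) * b = b ^ (p - 1) := by
        rw [← Real.rpow_add_one hb'.ne']
        ring_nf
      have h7 : (0:ℝ) ≤ (a + b) ^ (p - 2) := Real.rpow_nonneg (by linarith) _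
      have key : (p - 1) * (a + b) ^ (p - 2) * b ≤ b ^ (p - 1) := by
        rw [mul_assoc]
        calc (p - 1) * ((a + b) ^ (p - 2) * b) ≤ 1 * ((a + b) ^ (p - 2) * b) := by
              nlinarith [mul_nonneg h7 hb'.le]
          _ = (a + b) ^ (p - 2) * b := one_mul _
          _ ≤ b ^ (p - 2) * b := mul_le_mul_of_nonneg_right h5 hb'.le
          _ = b ^ (p - 1) := h6
      nlinarith [mul_le_mul_of_nonneg_left key hppos.le,
        Real.rpow_nonneg (show (0:ℝ) ≤ a + b by linarith) (p - 1)]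
  intro b hb
  have hm := hmono Set.self_mem_Ici hb hb
  simp only [mul_zero, add_zero, Real.zero_rpow hppos.ne'] at hm
  linarith

/-- For 1 ≤ p ≤ 2 the power function x ↦ x^p is subquadratic on [0,∞), with
C(x) = p·x^{p-1} as an admissible constant. -/
theorem rpow_subquadratic (p : ℝ) (hp1 : 1 ≤ p) (hp2 : p ≤ 2) (x : ℝ) (hx : 0 ≤ x) :
    ∃ C : ℝ, C = p * x ^ (p - 1) ∧
      ∀ y : ℝ, 0 ≤ y → y ^ p ≤ x ^ p + C * (y - x) + |y - x| ^ p := by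
  refine ⟨p * x ^ (p - 1), rfl, fun y hy => ?_⟩
  rcases le_total x y with hxy | hxy
  · have h := rpow_key1 hp1 hp2 hx (y - x) (by linarith)
    rw [abs_of_nonneg (by linarith)]
    have hxe : x + (y - x) = y := by ring
    rw [hxe] at h
    linarith
  · have h := rpow_key2 hp1 hp2 hy (x - y) (by linarith)
    rw [abs_of_nonpos (by linarith), neg_sub]
    have hxe : y + (x - y) = x := by ring
    rw [hxe] at h
    have hring : p * x ^ (p - 1) * (y - x) = -(p * x ^ (p - 1) * (x - y)) := by ring
    linarith
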